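/- Discrete Pontryagin Maximum Principle for the Strang-split Lindblad qubit (Proposition): Fix γ > 0, Δt > 0, α > 0, N ≥ 1, an initial 2×2 complex matrix ρ₀, and the target ρ_tgt := !![1,0;0,0]. For a control sequence u = (u_0,…,u_{N−1}) ∈ ℝᴺ define states ρ_0(u) := ρ₀, ρ_{k+1}(u) := F⁽²⁾(ρ_k(u), u_k), and the Bolza cost J(u) := Σ_{k=0}^{N−1} α·u_k²·Δt + (1 − Re trace(ρ_N(u) · ρ_tgt)). Suppose u* is a local minimizer of J over ℝᴺ. Define the costates backward by P_N := −ρ_tgt and P_k := F*(P_{k+1}, u_k*) for k = N−1,…,1, where F*(X, v) := Φ*^{Δt/2}( U(v)ᴴ · Φ*^{Δt/2}(X) · U(v) ), Φ*^τ(X) := E₀(τ)ᴴ·X·E₀(τ) + E₁(τ)ᴴ·X·E₁(τ), and U(v) := exp(−i·Δt·H(v)). Then for every k = 0,…,N−1, the real function v ↦ α·v²·Δt + Re trace( P_{k+1}ᴴ · F⁽²⁾(ρ_k(u*), v) ) has derivative zero at v = u_k*. -/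

import Mathlib

open Matrix
open scoped ComplexOrder
noncomputable section

/-- Pauli matrix σx. -/
def σx : Matrix (Fin 2) (Fin 2) ℂ := !![0, 1; 1, 0]

/-- The control Hamiltonian H(u) = (u/2) σx. -/
def Hctrl (u : ℝ) : Matrix (Fin 2) (Fin 2) ℂ := ((u : ℂ) / 2) • σx

/-- Decay probability p(τ) = 1 − e^{−γτ}. -/
def pAD (γ τ : ℝ) : ℝ := 1 - Real.exp (-(γ * τ))

/-- Kraus operator E₀(τ). -/
def E₀ (γ τ : ℝ) : Matrix (Fin 2) (Fin 2) ℂ :=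
  !![1, 0; 0, (Real.sqrt (1 - pAD γ τ) : ℂ)]

/-- Kraus operator E₁(τ). -/
def E₁ (γ τ : ℝ) : Matrix (Fin 2) (Fin 2) ℂ :=
  !![0, (Real.sqrt (pAD γ τ) : ℂ); 0, 0]

/-- The amplitude-damping channel Φ^τ. -/
def ΦAD (γ τ : ℝ) (ρ : Matrix (Fin 2) (Fin 2) ℂ) : Matrix (Fin 2) (Fin 2) ℂ :=
  E₀ γ τ * ρ * (E₀ γ τ)ᴴ + E₁ γ τ * ρ * (E₁ γ τ)ᴴ

/-- The unitary propagator U = exp(−i Δt H(u)). -/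
def Uprop (Δt u : ℝ) : Matrix (Fin 2) (Fin 2) ℂ :=
  NormedSpace.exp ((-Complex.I * (Δt : ℂ)) • Hctrl u)

/-- The Strang-split Lindblad integrator F⁽²⁾(ρ, u). -/
def Fstrang (γ Δt : ℝ) (ρ : Matrix (Fin 2) (Fin 2) ℂ) (u : ℝ) : Matrix (Fin 2) (Fin 2) ℂ :=
  ΦAD γ (Δt / 2) (Uprop Δt u * ΦAD γ (Δt / 2) ρ * (Uprop Δt u)ᴴ)

/-- The dual (Heisenberg-picture) amplitude-damping channel Φ*^τ. -/
def ΦADdual (γ τ : ℝ) (X : Matrix (Fin 2) (Fin 2) ℂ) : Matrix (Fin 2) (Fin 2) ℂ :=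
  (E₀ γ τ)ᴴ * X * E₀ γ τ + (E₁ γ τ)ᴴ * X * E₁ γ τ

/-- The dual Strang-split map F*(X, v). -/
def Fdual (γ Δt : ℝ) (X : Matrix (Fin 2) (Fin 2) ℂ) (v : ℝ) : Matrix (Fin 2) (Fin 2) ℂ :=
  ΦADdual γ (Δt / 2) ((Uprop Δt v)ᴴ * ΦADdual γ (Δt / 2) X * Uprop Δt v)

/-- The ground-state projector ρ_tgt = |0⟩⟨0|. -/
def ρtgt : Matrix (Fin 2) (Fin 2) ℂ := !![1, 0; 0, 0]

/-- The discrete state trajectory ρ_k(u) generated by the Strang-split integrator. -/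
def qTraj (γ Δt : ℝ) (ρ₀ : Matrix (Fin 2) (Fin 2) ℂ) {N : ℕ} (u : Fin N → ℝ) :
    ℕ → Matrix (Fin 2) (Fin 2) ℂ
  | 0 => ρ₀
  | (k + 1) =>
      if h : k < N then Fstrang γ Δt (qTraj γ Δt ρ₀ u k) (u ⟨k, h⟩)
      else qTraj γ Δt ρ₀ u k

/-- The backward costate sequence, indexed so that `qCostate γ Δt ρ₀ u j = P_{N-j}`:
`P_N = −ρ_tgt` and `P_k = F*(P_{k+1}, u_k)`. -/
def qCostate (γ Δt : ℝ) (ρ₀ : Matrix (Fin 2) (Fin 2) ℂ) {N : ℕ} (u : Fin N → ℝ) :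
    ℕ → Matrix (Fin 2) (Fin 2) ℂ
  | 0 => -ρtgt
  | (j + 1) =>
      if h : N - (j + 1) < N then
        Fdual γ Δt (qCostate γ Δt ρ₀ u j) (u ⟨N - (j + 1), h⟩)
      else qCostate γ Δt ρ₀ u j

/-- The discrete Bolza cost. -/
def qCost (γ Δt α : ℝ) (ρ₀ : Matrix (Fin 2) (Fin 2) ℂ) {N : ℕ} (u : Fin N → ℝ) : ℝ :=
  (∑ k : Fin N, α * u k ^ 2 * Δt) + (1 - ((qTraj γ Δt ρ₀ u N * ρtgt).trace).re)


section AuxPMP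

attribute [local instance] Matrix.linftyOpNormedRing Matrix.linftyOpNormedAlgebra

/-- scaled generator -/
private def Aσ (Δt : ℝ) : Matrix (Fin 2) (Fin 2) ℂ := ((-Complex.I * (Δt : ℂ)) / 2) • σx

private lemma Uprop_eq_exp (Δt v : ℝ) :
    Uprop Δt v = NormedSpace.exp (v • Aσ Δt) := by
  unfold Uprop Hctrl Aσ
  congr 1
  rw [smul_smul, ← smul_assoc]
  congr 1
  rw [Complex.real_smul]
  ring

private lemma rsmul_conjT (r : ℝ) (M : Matrix (Fin 2) (Fin 2) ℂ) : (r • M)ᴴ = r • Mᴴ := by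
  ext i j
  simp [Matrix.conjTranspose_apply]

private lemma hasDerivAt_Uprop (Δt t : ℝ) :
    HasDerivAt (fun v : ℝ => Uprop Δt v) (Uprop Δt t * Aσ Δt) t := by
  simp only [Uprop_eq_exp]
  have h := hasDerivAt_exp_smul_const (𝕂 := ℝ) (Aσ Δt) t
  convert h using 2 <;> rfl

private lemma hasDerivAt_UpropH (Δt t : ℝ) :
    HasDerivAt (fun v : ℝ => (Uprop Δt v)ᴴ) ((Uprop Δt t)ᴴ * (Aσ Δt)ᴴ) t := by
  have key : ∀ v : ℝ, (Uprop Δt v)ᴴ = NormedSpace.exp (v • (Aσ Δt)ᴴ) := by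
    intro v
    rw [Uprop_eq_exp, ← Matrix.exp_conjTranspose, rsmul_conjT]
  simp only [key]
  have h := hasDerivAt_exp_smul_const (𝕂 := ℝ) ((Aσ Δt)ᴴ) t
  convert h using 2 <;> rfl

private def Ttr : Matrix (Fin 2) (Fin 2) ℂ →ₗ[ℝ] ℝ :=
  Complex.reLm.comp ((Matrix.traceLinearMap (Fin 2) ℂ ℂ).restrictScalars ℝ)

private lemma hasDerivAt_retrace {f : ℝ → Matrix (Fin 2) (Fin 2) ℂ}
    {D : Matrix (Fin 2) (Fin 2) ℂ} {t : ℝ} (hf : HasDerivAt f D t) :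
    HasDerivAt (fun v => ((f v).trace).re) ((D.trace).re) t := by
  have := (Ttr.toContinuousLinearMap.hasFDerivAt (x := f t)).comp_hasDerivAt t hf
  exact this

/-- differentiability of the discrete Hamiltonian -/
private lemma exists_hasDerivAt_ham (γ Δt α : ℝ) (ρ Q : Matrix (Fin 2) (Fin 2) ℂ) (t : ℝ) :
    ∃ d, HasDerivAt (fun v : ℝ =>
      α * v ^ 2 * Δt + ((Q * Fstrang γ Δt ρ v).trace).re) d t := by
  have hU := hasDerivAt_Uprop Δt t
  have hUH := hasDerivAt_UpropH Δt t
  set K := ΦAD γ (Δt / 2) ρ with hK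
  have hM := (hU.mul_const K).mul hUH
  set c := Δt / 2
  have hF : HasDerivAt (fun v : ℝ => Fstrang γ Δt ρ v)
      (E₀ γ c * (Uprop Δt t * Aσ Δt * K * (Uprop Δt t)ᴴ +
          Uprop Δt t * K * ((Uprop Δt t)ᴴ * (Aσ Δt)ᴴ)) * (E₀ γ c)ᴴ +
        E₁ γ c * (Uprop Δt t * Aσ Δt * K * (Uprop Δt t)ᴴ +
          Uprop Δt t * K * ((Uprop Δt t)ᴴ * (Aσ Δt)ᴴ)) * (E₁ γ c)ᴴ) t := by
    have h0 := ((hM.const_mul (E₀ γ c)).mul_const ((E₀ γ c)ᴴ))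
    have h1 := ((hM.const_mul (E₁ γ c)).mul_const ((E₁ γ c)ᴴ))
    exact (h0.add h1)
  have hpoly : HasDerivAt (fun v : ℝ => α * v ^ 2 * Δt) (α * (2 * t) * Δt) t := by
    have := ((hasDerivAt_pow 2 t).const_mul α).mul_const Δt
    simpa [pow_one] using this
  exact ⟨_, hpoly.add (hasDerivAt_retrace (hF.const_mul Q))⟩

/-- trace cyclicity for Kraus conjugation -/
private lemma trace_kraus (E X Y : Matrix (Fin 2) (Fin 2) ℂ) :
    (E * X * Eᴴ * Y).trace = (X * (Eᴴ * Y * E)).trace := by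
  rw [show E * X * Eᴴ * Y = E * X * (Eᴴ * Y) by noncomm_ring,
    Matrix.trace_mul_comm,
    show Eᴴ * Y * (E * X) = Eᴴ * Y * E * X by noncomm_ring,
    Matrix.trace_mul_comm]

private lemma trace_ΦAD (γ τ : ℝ) (X Y : Matrix (Fin 2) (Fin 2) ℂ) :
    (ΦAD γ τ X * Y).trace = (X * ΦADdual γ τ Y).trace := by
  unfold ΦAD ΦADdual
  rw [add_mul, Matrix.trace_add, trace_kraus, trace_kraus, mul_add, Matrix.trace_add]

private lemma trace_Fstrang (γ Δt u : ℝ) (ρ Y : Matrix (Fin 2) (Fin 2) ℂ) :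
    (Fstrang γ Δt ρ u * Y).trace = (ρ * Fdual γ Δt Y u).trace := by
  unfold Fstrang Fdual
  rw [trace_ΦAD, trace_kraus, trace_ΦAD]

private lemma ΦADdual_conjT (γ τ : ℝ) (X : Matrix (Fin 2) (Fin 2) ℂ) :
    (ΦADdual γ τ X)ᴴ = ΦADdual γ τ Xᴴ := by
  simp [ΦADdual, Matrix.conjTranspose_mul, mul_assoc]

private lemma Fdual_conjT (γ Δt u : ℝ) (X : Matrix (Fin 2) (Fin 2) ℂ) :
    (Fdual γ Δt X u)ᴴ = Fdual γ Δt Xᴴ u := by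
  unfold Fdual
  rw [ΦADdual_conjT]
  congr 1
  simp [Matrix.conjTranspose_mul, ΦADdual_conjT, mul_assoc]

private lemma qCostate_herm (γ Δt : ℝ) (ρ₀ : Matrix (Fin 2) (Fin 2) ℂ) {N : ℕ}
    (u : Fin N → ℝ) : ∀ j, (qCostate γ Δt ρ₀ u j)ᴴ = qCostate γ Δt ρ₀ u j := by
  intro j
  induction j with
  | zero =>
      simp [qCostate, ρtgt]
      ext i j
      fin_cases i <;> fin_cases j <;> simp [Matrix.conjTranspose_apply]
  | succ j ih =>
      rw [qCostate]
      split
      · rw [Fdual_conjT, ih]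
      · exact ih

/-- trajectory only depends on earlier controls -/
private lemma qTraj_update (γ Δt : ℝ) (ρ₀ : Matrix (Fin 2) (Fin 2) ℂ) {N : ℕ}
    (u : Fin N → ℝ) (k : Fin N) (v : ℝ) :
    ∀ j, j ≤ (k : ℕ) → qTraj γ Δt ρ₀ (Function.update u k v) j = qTraj γ Δt ρ₀ u j := by
  intro j
  induction j with
  | zero => intro _; rfl
  | succ j ih =>
      intro hj
      have hj' : j ≤ (k : ℕ) := Nat.le_of_succ_le hj
      rw [qTraj, qTraj]
      split
      · rename_i h
        rw [ih hj', Function.update_of_ne]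
        intro hcon
        have : j = (k : ℕ) := by
          simpa using congrArg Fin.val hcon
        omega
      · exact ih hj'

end AuxPMP


private lemma qTraj_succ (γ Δt : ℝ) (ρ₀ : Matrix (Fin 2) (Fin 2) ℂ) {N : ℕ}
    (u : Fin N → ℝ) (j : ℕ) :
    qTraj γ Δt ρ₀ u (j + 1)
      = if h : j < N then Fstrang γ Δt (qTraj γ Δt ρ₀ u j) (u ⟨j, h⟩)
        else qTraj γ Δt ρ₀ u j := rfl

private lemma qCostate_succ (γ Δt : ℝ) (ρ₀ : Matrix (Fin 2) (Fin 2) ℂ) {N : ℕ}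
    (u : Fin N → ℝ) (j : ℕ) :
    qCostate γ Δt ρ₀ u (j + 1)
      = if h : N - (j + 1) < N then
          Fdual γ Δt (qCostate γ Δt ρ₀ u j) (u ⟨N - (j + 1), h⟩)
        else qCostate γ Δt ρ₀ u j := rfl

private lemma trace_invariant (γ Δt : ℝ) (ρ₀ : Matrix (Fin 2) (Fin 2) ℂ) {N : ℕ}
    (u ustar : Fin N → ℝ) (k : ℕ)
    (hagree : ∀ (j : ℕ) (h : j < N), k < j → u ⟨j, h⟩ = ustar ⟨j, h⟩) :
    ∀ j, k + 1 ≤ j → j ≤ N →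
      ((qTraj γ Δt ρ₀ u j) * (qCostate γ Δt ρ₀ ustar (N - j))).trace
        = ((qTraj γ Δt ρ₀ u (k + 1)) * (qCostate γ Δt ρ₀ ustar (N - (k + 1)))).trace := by
  intro j
  induction j with
  | zero => intro h1 _; omega
  | succ j ih =>
      intro h1 h2
      by_cases hj : k + 1 ≤ j
      · have hjN : j < N := by omega
        have hu : u ⟨j, hjN⟩ = ustar ⟨j, hjN⟩ := hagree j hjN (by omega)
        have hc : qCostate γ Δt ρ₀ ustar (N - j)
            = Fdual γ Δt (qCostate γ Δt ρ₀ ustar (N - (j + 1))) (ustar ⟨j, hjN⟩) := by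
          have hm : N - j = (N - (j + 1)) + 1 := by omega
          have hcond : N - ((N - (j + 1)) + 1) < N := by omega
          rw [hm, qCostate_succ, dif_pos hcond]
          have hfin : (⟨N - ((N - (j + 1)) + 1), hcond⟩ : Fin N) = ⟨j, hjN⟩ :=
            Fin.ext (show N - ((N - (j + 1)) + 1) = j by omega)
          rw [hfin]
        rw [qTraj_succ, dif_pos hjN, trace_Fstrang, hu, ← hc]
        exact ih hj (by omega)
      · have hjk : j = k := by omega
        subst hjk
        rfl

/-- Discrete Pontryagin Maximum Principle for the Strang-split Lindblad qubit: at a local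
minimizer of the Bolza cost, for each k the function
`v ↦ α v² Δt + Re tr(P_{k+1}ᴴ F⁽²⁾(ρ_k(u*), v))` has derivative zero at `v = u*_k`. -/
theorem discrete_PMP_strang_lindblad_qubit (γ Δt α : ℝ) (hγ : 0 < γ) (hΔt : 0 < Δt)
    (hα : 0 < α) (N : ℕ) (hN : 1 ≤ N) (ρ₀ : Matrix (Fin 2) (Fin 2) ℂ)
    (ustar : Fin N → ℝ)
    (hmin : IsLocalMin (fun u : Fin N → ℝ => qCost γ Δt α ρ₀ u) ustar) :
    ∀ k : Fin N,
      HasDerivAt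
        (fun v : ℝ => α * v ^ 2 * Δt +
          (((qCostate γ Δt ρ₀ ustar (N - ((k : ℕ) + 1)))ᴴ *
              Fstrang γ Δt (qTraj γ Δt ρ₀ ustar (k : ℕ)) v).trace).re)
        0 (ustar k) := by
  intro k
  set Q : Matrix (Fin 2) (Fin 2) ℂ := qCostate γ Δt ρ₀ ustar (N - ((k : ℕ) + 1)) with hQ
  set ρk : Matrix (Fin 2) (Fin 2) ℂ := qTraj γ Δt ρ₀ ustar (k : ℕ) with hρk
  obtain ⟨d, hd⟩ := exists_hasDerivAt_ham γ Δt α ρk (Qᴴ) (ustar k)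
  set g : ℝ → ℝ := fun v => α * v ^ 2 * Δt + ((Qᴴ * Fstrang γ Δt ρk v).trace).re with hg
  set C : ℝ := (∑ j ∈ Finset.univ \ {k}, α * ustar j ^ 2 * Δt) + 1 with hC
  have hkN : (k : ℕ) < N := k.isLt
  -- cost identity
  have costid : ∀ v : ℝ, qCost γ Δt α ρ₀ (Function.update ustar k v) = g v + C := by
    intro v
    set u' : Fin N → ℝ := Function.update ustar k v with hu'
    have hsum : (∑ j : Fin N, α * u' j ^ 2 * Δt)
        = α * v ^ 2 * Δt + ∑ j ∈ Finset.univ \ {k}, α * ustar j ^ 2 * Δt := by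
      have hfn : (fun j : Fin N => α * u' j ^ 2 * Δt)
          = Function.update (fun j : Fin N => α * ustar j ^ 2 * Δt) k (α * v ^ 2 * Δt) := by
        funext j
        by_cases hj : j = k
        · subst hj; simp [hu']
        · simp [hu', Function.update_of_ne hj]
      rw [hfn, Finset.sum_update_of_mem (Finset.mem_univ k)]
    have hagree : ∀ (j : ℕ) (h : j < N), (k : ℕ) < j → u' ⟨j, h⟩ = ustar ⟨j, h⟩ := by
      intro j h hkj
      apply Function.update_of_ne
      intro hcon
      have : j = (k : ℕ) := by simpa using congrArg Fin.val hcon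
      omega
    have hinv := trace_invariant γ Δt ρ₀ u' ustar (k : ℕ) hagree N (by omega) le_rfl
    have hNN : N - N = 0 := by omega
    rw [hNN] at hinv
    have hc0 : qCostate γ Δt ρ₀ ustar 0 = -ρtgt := rfl
    have hstep : qTraj γ Δt ρ₀ u' ((k : ℕ) + 1) = Fstrang γ Δt ρk v := by
      have harg : u' ⟨(k : ℕ), hkN⟩ = v := by
        have hfe : (⟨(k : ℕ), hkN⟩ : Fin N) = k := Fin.ext rfl
        rw [hfe, hu']
        exact Function.update_self k v ustar
      rw [qTraj_succ, dif_pos hkN, qTraj_update γ Δt ρ₀ ustar k v (k : ℕ) le_rfl,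
        harg, ← hρk]
    rw [hc0, hstep, mul_neg, Matrix.trace_neg] at hinv
    have htr : ((qTraj γ Δt ρ₀ u' N * ρtgt).trace).re
        = -(((Qᴴ * Fstrang γ Δt ρk v).trace).re) := by
      have hQh : Qᴴ = Q := qCostate_herm γ Δt ρ₀ ustar _
      have h3 := congrArg Complex.re hinv
      simp only [Complex.neg_re] at h3
      rw [← hQ] at h3
      rw [hQh, Matrix.trace_mul_comm Q (Fstrang γ Δt ρk v)]
      linarith [h3]
    rw [qCost, hsum, htr, hg, hC]
    ring
  -- local minimality of g
  have htend : Filter.Tendsto (fun v : ℝ => Function.update ustar k v)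
      (nhds (ustar k)) (nhds ustar) := by
    have hup : Continuous (fun v : ℝ => Function.update ustar k v) :=
      continuous_const.update k continuous_id
    have := hup.tendsto (ustar k)
    rwa [Function.update_eq_self] at this
  have hmin' : IsMinFilter (fun u : Fin N → ℝ => qCost γ Δt α ρ₀ u) (nhds ustar)
      ((fun v : ℝ => Function.update ustar k v) (ustar k)) := by
    rw [show (fun v : ℝ => Function.update ustar k v) (ustar k) = ustar from
      Function.update_eq_self k ustar]
    exact hmin
  have h1 : IsLocalMin (fun v : ℝ => qCost γ Δt α ρ₀ (Function.update ustar k v))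
      (ustar k) := hmin'.comp_tendsto htend
  have h2 : IsLocalMin g (ustar k) := by
    have h1' : ∀ᶠ v in nhds (ustar k),
        qCost γ Δt α ρ₀ (Function.update ustar k (ustar k))
          ≤ qCost γ Δt α ρ₀ (Function.update ustar k v) := h1
    have h2' : ∀ᶠ v in nhds (ustar k), g (ustar k) ≤ g v := by
      filter_upwards [h1'] with v hv
      rw [costid v, costid (ustar k)] at hv
      linarith
    exact h2'
  have hd0 : d = 0 := h2.hasDerivAt_eq_zero hd
  rw [← hd0]
  exact hd
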